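/- arXiv:1810.09778 — 4 statements merged into one kernel-verified Lean document; each statement's English description precedes it below -/
import Mathlib

section
/- Let (s_k) be a real sequence converging to 0, and let K ∈ ℕ be the least integer satisfying sup_{0 ≤ l ≤ K} s_l > sup_{l > K} s_l (assuming such an integer exists). Then s_K > 0. -/
theorem stmt_4 (s : ℕ → ℝ) (hs : Filter.Tendsto s Filter.atTop (nhds 0))
    (T : Set ℕ) (hT : T = {k : ℕ | sSup (s '' Set.Ioi k) < sSup (s '' Set.Iic k)})
    (hne : T.Nonempty) (K : ℕ) (hK : K = sInf T) :
    0 < s K := by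
  classical
  have hb : BddAbove (Set.range s) := hs.bddAbove_range
  have hbd : ∀ u : Set ℕ, BddAbove (s '' u) := fun u =>
    hb.mono (Set.image_subset_range s u)
  have hKT : K ∈ T := hK ▸ Nat.sInf_mem hne
  rw [hT] at hKT
  set A := sSup (s '' Set.Iic K) with hA
  set B := sSup (s '' Set.Ioi K) with hB
  -- B ≥ 0
  have hB0 : 0 ≤ B := by
    refine le_of_tendsto hs ?_
    filter_upwards [Filter.eventually_gt_atTop K] with n hn
    exact le_csSup (hbd _) ⟨n, hn, rfl⟩
  have hA0 : 0 < A := lt_of_le_of_lt hB0 hKT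
  -- A is attained
  have hfin : (s '' Set.Iic K).Finite := (Set.finite_Iic K).image s
  have hne1 : (s '' Set.Iic K).Nonempty := ⟨s K, K, le_refl K, rfl⟩
  have hAmem : A ∈ s '' Set.Iic K := hne1.csSup_mem hfin
  obtain ⟨m0, hm0K, hm0⟩ := hAmem
  set l := Nat.findGreatest (fun m => s m = A) K with hl
  have hsl : s l = A := Nat.findGreatest_spec (P := fun m => s m = A) hm0K hm0
  have hlK : l ≤ K := Nat.findGreatest_le K
  have hgt : ∀ m, l < m → m ≤ K → s m ≠ A :=
    fun m h1 h2 => Nat.findGreatest_is_greatest h1 h2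
  have hlKeq : l = K := by
    by_contra hne'
    have hlt : l < K := lt_of_le_of_ne hlK hne'
    have hlnT : l ∉ T := by
      rw [hK] at hlt
      exact Nat.notMem_of_lt_sInf hlt
    rw [hT] at hlnT
    simp only [Set.mem_setOf_eq, not_lt] at hlnT
    -- sup over Iic l ≥ s l = A
    have h1 : A ≤ sSup (s '' Set.Iic l) :=
      hsl ▸ le_csSup (hbd _) ⟨l, le_refl l, rfl⟩
    have h2 : sSup (s '' Set.Ioi l) < A := by
      have hsplit : Set.Ioi l = Set.Ioc l K ∪ Set.Ioi K := by
        ext x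
        simp only [Set.mem_Ioi, Set.mem_union, Set.mem_Ioc]
        constructor
        · intro h; rcases le_or_gt x K with h' | h'
          · exact Or.inl ⟨h, h'⟩
          · exact Or.inr h'
        · rintro (⟨h, _⟩ | h); · exact h
          · exact lt_trans hlt h
      rw [hsplit, Set.image_union,
        csSup_union (hbd _) (⟨s K, K, ⟨hlt, le_refl K⟩, rfl⟩ : (s '' Set.Ioc l K).Nonempty)
          (hbd _) (⟨s (K+1), K+1, Nat.lt_succ_self K, rfl⟩ : (s '' Set.Ioi K).Nonempty)]
      refine sup_lt_iff.mpr ⟨?_, hKT⟩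
      have hfin2 : (s '' Set.Ioc l K).Finite := (Set.finite_Ioc l K).image s
      have hne2 : (s '' Set.Ioc l K).Nonempty := ⟨s K, K, ⟨hlt, le_refl K⟩, rfl⟩
      have hmem2 : sSup (s '' Set.Ioc l K) ∈ s '' Set.Ioc l K := hne2.csSup_mem hfin2
      obtain ⟨m, ⟨hm1, hm2⟩, hm3⟩ := hmem2
      rw [← hm3]
      have hle : s m ≤ A := le_csSup (hbd _) ⟨m, hm2, rfl⟩
      exact lt_of_le_of_ne hle (hgt m hm1 hm2)
    exact absurd (le_trans h1 hlnT) (not_le.mpr h2)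
  rw [← hlKeq, hsl]
  exact hA0
end

section
/- Let A be a d×d real matrix and P a positive definite d×d real matrix such that P − AᵀPA is positive definite. Then the operator norm of A with respect to the norm ‖x‖_P = √(xᵀPx) satisfies 0 ≤ ‖A‖_P < 1, i.e., for all x ≠ 0, xᵀAᵀPAx < xᵀPx, and the supremum of xᵀAᵀPAx over {x : xᵀPx = 1} is strictly less than 1. -/
open Matrix

private lemma quad_smul {d : ℕ} (Q : Matrix (Fin d) (Fin d) ℝ) (c : ℝ) (x : Fin d → ℝ) :
    (c • x) ⬝ᵥ Q.mulVec (c • x) = c ^ 2 * (x ⬝ᵥ Q.mulVec x) := by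
  simp [Matrix.mulVec_smul, smul_dotProduct, dotProduct_smul, pow_two]; ring

private lemma quad_cont {d : ℕ} (Q : Matrix (Fin d) (Fin d) ℝ) :
    Continuous fun x : Fin d → ℝ => x ⬝ᵥ Q.mulVec x := by
  simp only [dotProduct, Matrix.mulVec]
  fun_prop

theorem stmt_9 (d : ℕ) (A P : Matrix (Fin d) (Fin d) ℝ)
    (hP : P.PosDef) (hLyap : (P - Aᵀ * P * A).PosDef) :
    (∀ x : Fin d → ℝ, x ≠ 0 → x ⬝ᵥ (Aᵀ * P * A).mulVec x < x ⬝ᵥ P.mulVec x) ∧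
      sSup {r : ℝ | ∃ x : Fin d → ℝ, x ⬝ᵥ P.mulVec x = 1 ∧ r = x ⬝ᵥ (Aᵀ * P * A).mulVec x} < 1 := by
  have key : ∀ x : Fin d → ℝ, x ≠ 0 →
      x ⬝ᵥ (Aᵀ * P * A).mulVec x < x ⬝ᵥ P.mulVec x := by
    intro x hx
    have := hLyap.dotProduct_mulVec_pos hx
    simp only [star_trivial] at this
    have h2 : x ⬝ᵥ (P - Aᵀ * P * A).mulVec x
        = x ⬝ᵥ P.mulVec x - x ⬝ᵥ (Aᵀ * P * A).mulVec x := by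
      simp [Matrix.sub_mulVec, dotProduct_sub]
    linarith [h2 ▸ this]
  refine ⟨key, ?_⟩
  have hpsd : ∀ x : Fin d → ℝ, 0 ≤ x ⬝ᵥ (Aᵀ * P * A).mulVec x := by
    intro x
    simpa using (hP.posSemidef.conjTranspose_mul_mul_same A).dotProduct_mulVec_nonneg x
  by_cases hd : d = 0
  · subst hd
    have hset : {r : ℝ | ∃ x : Fin 0 → ℝ, x ⬝ᵥ P.mulVec x = 1 ∧
        r = x ⬝ᵥ (Aᵀ * P * A).mulVec x} = ∅ := by
      ext r
      simp only [Set.mem_setOf_eq, Set.mem_empty_iff_false, iff_false, not_exists]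
      intro x hx
      exfalso
      have : x ⬝ᵥ P.mulVec x = 0 := by simp [dotProduct]
      rw [hx.1] at this; norm_num at this
    rw [hset, Real.sSup_empty]; norm_num
  · have hdpos : 0 < d := Nat.pos_of_ne_zero hd
    haveI : Nonempty (Fin d) := ⟨⟨0, hdpos⟩⟩
    set Q := P - Aᵀ * P * A with hQ
    set f := fun x : Fin d → ℝ => x ⬝ᵥ Q.mulVec x with hf
    set g := fun x : Fin d → ℝ => x ⬝ᵥ P.mulVec x with hg
    have hfg : ∀ x : Fin d → ℝ, f x = g x - x ⬝ᵥ (Aᵀ * P * A).mulVec x := by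
      intro x; simp [hf, hg, hQ, Matrix.sub_mulVec, dotProduct_sub]
    have hfpos : ∀ x : Fin d → ℝ, x ≠ 0 → 0 < f x := by
      intro x hx; simpa using hLyap.dotProduct_mulVec_pos hx
    have hgpos : ∀ x : Fin d → ℝ, x ≠ 0 → 0 < g x := by
      intro x hx; simpa using hP.dotProduct_mulVec_pos hx
    have hSph : IsCompact (Metric.sphere (0 : Fin d → ℝ) 1) := isCompact_sphere 0 1
    have hSphNe : (Metric.sphere (0 : Fin d → ℝ) 1).Nonempty :=
      NormedSpace.sphere_nonempty.mpr zero_le_one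
    obtain ⟨x₀, hx₀S, hx₀min⟩ := hSph.exists_isMinOn hSphNe (quad_cont Q).continuousOn
    obtain ⟨x₁, hx₁S, hx₁max⟩ := hSph.exists_isMaxOn hSphNe (quad_cont P).continuousOn
    have hx₀ne : x₀ ≠ 0 := by
      intro h; rw [Metric.mem_sphere, h] at hx₀S; simp at hx₀S
    have hx₁ne : x₁ ≠ 0 := by
      intro h; rw [Metric.mem_sphere, h] at hx₁S; simp at hx₁S
    set ε := f x₀ with hε
    set M := g x₁ with hM
    have hεpos : 0 < ε := hfpos x₀ hx₀ne
    have hMpos : 0 < M := hgpos x₁ hx₁ne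
    have hεleM : ε ≤ M := by
      have h1 : ε ≤ f x₁ := hx₀min hx₁S
      have h2 : f x₁ ≤ g x₁ := by
        rw [hfg x₁]; linarith [hpsd x₁]
    -- lower bound f, upper bound g for general nonzero x
      linarith
    have hεM1 : ε / M ≤ 1 := by
      rw [div_le_one hMpos]; exact hεleM
    have hεMpos : 0 < ε / M := div_pos hεpos hMpos
    apply lt_of_le_of_lt (b := 1 - ε / M)
    · apply Real.sSup_le
      · rintro r ⟨x, hx1, rfl⟩
        have hxne : x ≠ 0 := by
          intro h; rw [h] at hx1; simp [dotProduct] at hx1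
        have hnx : (0:ℝ) < ‖x‖ := norm_pos_iff.mpr hxne
        set u := ‖x‖⁻¹ • x with hu
        have huS : u ∈ Metric.sphere (0 : Fin d → ℝ) 1 := by
          simp [hu, norm_smul, abs_of_pos (inv_pos.mpr hnx), inv_mul_cancel₀ hnx.ne']
        have hxu : x = ‖x‖ • u := by
          rw [hu, smul_smul, mul_inv_cancel₀ hnx.ne', one_smul]
        have hflow : ε ≤ f u := hx₀min huS
        have hghigh : g u ≤ M := hx₁max huS
        have hfx : f x = ‖x‖ ^ 2 * f u := by conv_lhs => rw [hxu]; exact quad_smul Q _ u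
        have hgx : g x = ‖x‖ ^ 2 * g u := by conv_lhs => rw [hxu]; exact quad_smul P _ u
        have hgx1 : g x = 1 := hx1
        have hn2 : 1 / M ≤ ‖x‖ ^ 2 := by
          rw [div_le_iff₀ hMpos]
          calc (1:ℝ) = g x := hgx1.symm
            _ = ‖x‖ ^ 2 * g u := hgx
            _ ≤ ‖x‖ ^ 2 * M := by
                exact mul_le_mul_of_nonneg_left hghigh (sq_nonneg _)
        have hfgeq : f x ≥ ε / M := by
          calc ε / M = ε * (1 / M) := by ring
            _ ≤ ε * ‖x‖ ^ 2 := mul_le_mul_of_nonneg_left hn2 hεpos.le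
            _ = ‖x‖ ^ 2 * ε := by ring
            _ ≤ ‖x‖ ^ 2 * f u := mul_le_mul_of_nonneg_left hflow (sq_nonneg _)
            _ = f x := hfx.symm
        have := hfg x
        have : x ⬝ᵥ (Aᵀ * P * A).mulVec x = g x - f x := by rw [this]; ring
        rw [this, hgx1]
        linarith
      · linarith
    · linarith
end

section
/- Let A be a d×d real matrix with spectral radius strictly less than 1. Then there exists a positive definite matrix P such that P − AᵀPA is positive definite. -/
open Matrix Filter Topology

attribute [local instance] Matrix.frobeniusSeminormedAddCommGroup
  Matrix.frobeniusNormedAddCommGroup Matrix.frobeniusNormedSpace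
  Matrix.frobeniusNormedRing Matrix.frobeniusNormedAlgebra

theorem stmt_10 (d : ℕ) (A : Matrix (Fin d) (Fin d) ℝ)
    (hA : ∀ μ ∈ spectrum ℂ (A.map (Complex.ofReal)), ‖μ‖ < 1) :
    ∃ P : Matrix (Fin d) (Fin d) ℝ, P.PosDef ∧ (P - Aᵀ * P * A).PosDef := by
  rcases Nat.eq_zero_or_pos d with hd | hd
  · subst hd
    exact ⟨1, ⟨Subsingleton.elim _ _, fun x hx => (hx (Subsingleton.elim _ _)).elim⟩,
      ⟨Subsingleton.elim _ _, fun x hx => (hx (Subsingleton.elim _ _)).elim⟩⟩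
  haveI : Nonempty (Fin d) := ⟨⟨0, hd⟩⟩
  haveI : Nontrivial (Matrix (Fin d) (Fin d) ℂ) :=
    ⟨0, 1, fun h => by simpa using congr_fun (congr_fun h ⟨0, hd⟩) ⟨0, hd⟩⟩
  -- powers of the complexified matrix
  have hBpow : ∀ n : ℕ, (A.map Complex.ofReal) ^ n = (A ^ n).map Complex.ofReal := by
    intro n
    have := map_pow (Complex.ofRealHom.mapMatrix :
      Matrix (Fin d) (Fin d) ℝ →+* Matrix (Fin d) (Fin d) ℂ) A n
    exact this.symm
  have hnorm : ∀ n : ℕ, ‖(A.map Complex.ofReal) ^ n‖₊ = ‖A ^ n‖₊ := by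
    intro n
    rw [hBpow]
    exact Matrix.frobenius_nnnorm_map_eq _ _ (fun a => by simp)
  -- spectral radius < 1
  have hρ : spectralRadius ℂ (A.map Complex.ofReal) < 1 := by
    have := spectrum.spectralRadius_lt_of_forall_lt (A.map Complex.ofReal)
      (r := 1) (fun z hz => by
        have := hA z hz
        simpa [← NNReal.coe_lt_coe] using this)
    simpa using this
  obtain ⟨t, htρ, ht1'⟩ := ENNReal.lt_iff_exists_nnreal_btwn.mp hρ
  have ht1 : t < 1 := by exact_mod_cast ht1'
  have hG := spectrum.pow_nnnorm_pow_one_div_tendsto_nhds_spectralRadius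
    (A.map Complex.ofReal)
  have hev : ∀ᶠ n : ℕ in atTop,
      ((‖(A.map Complex.ofReal) ^ n‖₊ : ENNReal) ^ (1 / (n : ℝ))) < (t : ENNReal) :=
    hG.eventually_lt_const htρ
  -- eventual geometric bound
  have hbound : ∀ᶠ n : ℕ in atTop, ‖(A ^ n)ᵀ * A ^ n‖ ≤ (((t : ℝ)) ^ 2) ^ n := by
    filter_upwards [hev, eventually_ge_atTop 1] with n hn hn1
    have hn0 : (n : ℝ) ≠ 0 := by positivity
    have hx : (‖(A.map Complex.ofReal) ^ n‖₊ : ENNReal) < (t : ENNReal) ^ n := by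
      have h1 := (ENNReal.pow_lt_pow_left_iff (n := n) (by omega)).mpr hn
      rwa [← ENNReal.rpow_natCast ((_ : ENNReal) ^ (1 / (n : ℝ))) n,
        ← ENNReal.rpow_mul, one_div, inv_mul_cancel₀ hn0, ENNReal.rpow_one] at h1
    have hx2 : ‖A ^ n‖₊ < t ^ n := by
      rw [← hnorm n]
      exact_mod_cast hx
    have hx3 : ‖A ^ n‖ ≤ (t : ℝ) ^ n := by
      have := hx2.le
      exact_mod_cast this
    calc ‖(A ^ n)ᵀ * A ^ n‖ ≤ ‖(A ^ n)ᵀ‖ * ‖A ^ n‖ := norm_mul_le _ _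
      _ = ‖A ^ n‖ * ‖A ^ n‖ := by rw [Matrix.frobenius_norm_transpose]
      _ ≤ (t : ℝ) ^ n * (t : ℝ) ^ n := by
          have h0 : (0 : ℝ) ≤ ‖A ^ n‖ := norm_nonneg _
          nlinarith
      _ = (((t : ℝ)) ^ 2) ^ n := by ring
  have hsum : Summable (fun n : ℕ => (A ^ n)ᵀ * A ^ n) := by
    refine Summable.of_norm_bounded_eventually_nat
      (summable_geometric_of_lt_one (by positivity) ?_) hbound
    have ht0 : (0 : ℝ) ≤ (t : ℝ) := t.coe_nonneg
    have ht1R : (t : ℝ) < 1 := by exact_mod_cast ht1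
    nlinarith
  set P : Matrix (Fin d) (Fin d) ℝ := ∑' n : ℕ, (A ^ n)ᵀ * A ^ n with hPdef
  -- transpose linear map
  let trL : Matrix (Fin d) (Fin d) ℝ →ₗ[ℝ] Matrix (Fin d) (Fin d) ℝ :=
    { toFun := fun M => Mᵀ
      map_add' := fun a b => Matrix.transpose_add a b
      map_smul' := fun c a => Matrix.transpose_smul c a }
  have hPT : Pᵀ = P := by
    have h1 : (LinearMap.toContinuousLinearMap trL) P
        = ∑' n : ℕ, (LinearMap.toContinuousLinearMap trL) ((A ^ n)ᵀ * A ^ n) :=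
      ContinuousLinearMap.map_tsum _ hsum
    simp only [LinearMap.coe_toContinuousLinearMap', LinearMap.coe_mk, AddHom.coe_mk, trL] at h1
    rw [h1]
    exact tsum_congr fun n => by rw [Matrix.transpose_mul, Matrix.transpose_transpose]
  have hHerm : P.IsHermitian := by
    show Pᴴ = P
    refine Matrix.ext fun i j => ?_
    simp only [Matrix.conjTranspose_apply, star_trivial]
    exact congrFun (congrFun hPT i) j
  -- quadratic form of P
  have hquad : ∀ x : Fin d → ℝ,
      dotProduct x (P *ᵥ x) = ∑' n : ℕ, dotProduct (A ^ n *ᵥ x) (A ^ n *ᵥ x) := by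
    intro x
    let φ : Matrix (Fin d) (Fin d) ℝ →ₗ[ℝ] ℝ :=
      { toFun := fun M => dotProduct x (M *ᵥ x)
        map_add' := fun a b => by simp [Matrix.add_mulVec, dotProduct_add]
        map_smul' := fun c a => by simp [Matrix.smul_mulVec, dotProduct_smul] }
    have h1 : (LinearMap.toContinuousLinearMap φ) P
        = ∑' n : ℕ, (LinearMap.toContinuousLinearMap φ) ((A ^ n)ᵀ * A ^ n) :=
      ContinuousLinearMap.map_tsum _ hsum
    simp only [LinearMap.coe_toContinuousLinearMap', LinearMap.coe_mk, AddHom.coe_mk, φ] at h1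
    rw [h1]
    exact tsum_congr fun n => by
      rw [← Matrix.mulVec_mulVec, Matrix.dotProduct_mulVec, Matrix.vecMul_transpose]
  have hquadsum : ∀ x : Fin d → ℝ,
      Summable (fun n : ℕ => dotProduct (A ^ n *ᵥ x) (A ^ n *ᵥ x)) := by
    intro x
    let φ : Matrix (Fin d) (Fin d) ℝ →ₗ[ℝ] ℝ :=
      { toFun := fun M => dotProduct x (M *ᵥ x)
        map_add' := fun a b => by simp [Matrix.add_mulVec, dotProduct_add]
        map_smul' := fun c a => by simp [Matrix.smul_mulVec, dotProduct_smul] }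
    have h1 : Summable (fun n : ℕ => (LinearMap.toContinuousLinearMap φ) ((A ^ n)ᵀ * A ^ n)) :=
      hsum.map _ (LinearMap.toContinuousLinearMap φ).continuous
    simp only [LinearMap.coe_toContinuousLinearMap', LinearMap.coe_mk, AddHom.coe_mk, φ] at h1
    refine h1.congr fun n => ?_
    rw [← Matrix.mulVec_mulVec, Matrix.dotProduct_mulVec, Matrix.vecMul_transpose]
  have hPpos : P.PosDef := by
    refine Matrix.PosDef.of_dotProduct_mulVec_pos hHerm fun x hx => ?_
    have hx0 : (0 : ℝ) < dotProduct x x := by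
      have h := dotProduct_self_star_pos_iff (v := x)
      simpa using h.mpr hx
    have hterm0 : dotProduct (A ^ 0 *ᵥ x) (A ^ 0 *ᵥ x) = dotProduct x x := by
      simp [Matrix.one_mulVec]
    have hle : dotProduct (A ^ 0 *ᵥ x) (A ^ 0 *ᵥ x)
        ≤ ∑' n : ℕ, dotProduct (A ^ n *ᵥ x) (A ^ n *ᵥ x) :=
      Summable.le_tsum (hquadsum x) 0 (fun j _ => by
        exact Finset.sum_nonneg fun i _ => mul_self_nonneg _)
    have : (0 : ℝ) < dotProduct x (P *ᵥ x) := by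
      rw [hquad x]
      calc (0 : ℝ) < dotProduct x x := hx0
        _ = dotProduct (A ^ 0 *ᵥ x) (A ^ 0 *ᵥ x) := hterm0.symm
        _ ≤ _ := hle
    simpa using this
  -- the Lyapunov identity
  have hPA : Aᵀ * P * A = ∑' n : ℕ, (A ^ (n + 1))ᵀ * A ^ (n + 1) := by
    have h1 : P * A = ∑' n : ℕ, ((A ^ n)ᵀ * A ^ n) * A := (hsum.tsum_mul_right A).symm
    have h2 : Aᵀ * (P * A) = ∑' n : ℕ, Aᵀ * (((A ^ n)ᵀ * A ^ n) * A) := by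
      rw [h1, ← (hsum.mul_right A).tsum_mul_left Aᵀ]
    rw [mul_assoc, h2]
    refine tsum_congr fun n => ?_
    rw [pow_succ, Matrix.transpose_mul]
    simp only [mul_assoc]
  have hkey : P - Aᵀ * P * A = 1 := by
    have h0 : P = 1 + Aᵀ * P * A := by
      rw [hPA, hPdef, Summable.tsum_eq_zero_add hsum]
      simp
    nth_rewrite 1 [h0]
    rw [add_sub_cancel_right]
  refine ⟨P, hPpos, ?_⟩
  rw [hkey]
  refine Matrix.PosDef.of_dotProduct_mulVec_pos Matrix.isHermitian_one fun x hx => ?_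
  have hx0 : (0 : ℝ) < dotProduct x x := by
    have h := dotProduct_self_star_pos_iff (v := x)
    simpa using h.mpr hx
  simpa [Matrix.one_mulVec] using hx0
end

section
/- Let A be a d×d real matrix, P positive definite with P − AᵀPA ⪰ 0 (so that ‖A‖_P ≤ 1 with ‖·‖_P the P-operator norm), Q symmetric with tP − Q ⪰ 0 for some t > 0, q ∈ ℝ^d, and X ⊆ ℝ^d. Then for all k ∈ ℕ and x ∈ X: xᵀ(Aᵏ)ᵀQAᵏx + qᵀAᵏx ≤ t‖A‖_P^{2k} μ(P)² + (‖q‖₂ / √(λ_min(P))) ‖A‖_P^k μ(P), where μ(P) = sup_{x∈X} √(xᵀPx). -/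
open Matrix

private theorem aux_lmin_bound (d : ℕ) (P : Matrix (Fin d) (Fin d) ℝ) (hP : P.PosDef)
    (y : Fin d → ℝ) :
    (⨅ i, hP.1.eigenvalues i) * (y ⬝ᵥ y) ≤ y ⬝ᵥ P.mulVec y := by
  set l := ⨅ i, hP.1.eigenvalues i with hl
  have hle : ∀ i, l ≤ hP.1.eigenvalues i := fun i =>
    ciInf_le (Set.Finite.bddBelow (Set.finite_range _)) i
  have hps : (P - l • 1).PosSemidef := by
    have hspec := hP.1.spectral_theorem
    simp only [Unitary.conjStarAlgAut_apply, Unitary.coe_star] at hspec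
    rw [show star (hP.1.eigenvectorUnitary : Matrix (Fin d) (Fin d) ℝ) =
      (hP.1.eigenvectorUnitary : Matrix (Fin d) (Fin d) ℝ)ᴴ from rfl] at hspec
    set U : Matrix (Fin d) (Fin d) ℝ := (hP.1.eigenvectorUnitary : Matrix (Fin d) (Fin d) ℝ)
      with hU
    have hUU : U * Uᴴ = 1 := Matrix.mem_unitaryGroup_iff.mp hP.1.eigenvectorUnitary.2
    have h1 : P - l • 1 = U * (diagonal (fun i => hP.1.eigenvalues i - l)) * Uᴴ := by
      have h2 : (l • (1:Matrix (Fin d) (Fin d) ℝ)) = U * (l • 1) * Uᴴ := by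
        rw [Matrix.mul_smul, Matrix.smul_mul, Matrix.mul_one, hUU]
      calc P - l • 1 = U * (diagonal (RCLike.ofReal ∘ hP.1.eigenvalues) - l • 1) * Uᴴ := by
            rw [Matrix.mul_sub, Matrix.sub_mul, ← hspec, ← h2]
        _ = U * (diagonal (fun i => hP.1.eigenvalues i - l)) * Uᴴ := by
            rw [Matrix.smul_one_eq_diagonal, Matrix.diagonal_sub]
            simp [RCLike.ofReal_real_eq_id]
    rw [h1]
    exact (Matrix.posSemidef_diagonal_iff.mpr fun i => sub_nonneg.mpr (hle i)
      ).mul_mul_conjTranspose_same U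
  have h3 := hps.dotProduct_mulVec_nonneg y
  simp only [Matrix.sub_mulVec, Matrix.smul_mulVec, Matrix.one_mulVec, dotProduct_sub,
    dotProduct_smul, RCLike.re_to_real, star_trivial, smul_eq_mul] at h3
  linarith

theorem stmt_18 (d : ℕ) (hd : 0 < d) (A P Q : Matrix (Fin d) (Fin d) ℝ)
    (hP : P.PosDef) (hLyap : (P - Aᵀ * P * A).PosSemidef)
    (hQ : Q.IsSymm) (t : ℝ) (ht : 0 < t) (htPQ : (t • P - Q).PosSemidef)
    (q : Fin d → ℝ) (X : Set (Fin d → ℝ)) (hX : IsCompact X)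
    (normAP : ℝ)
    (hnorm : normAP =
      sSup {r : ℝ | ∃ x : Fin d → ℝ, x ≠ 0 ∧
        r = Real.sqrt ((x ⬝ᵥ (Aᵀ * P * A).mulVec x) / (x ⬝ᵥ P.mulVec x))})
    (lmin : ℝ) (hlmin : lmin = ⨅ i, hP.1.eigenvalues i)
    (μ : ℝ) (hμ : μ = sSup ((fun x => Real.sqrt (x ⬝ᵥ P.mulVec x)) '' X)) :
    ∀ k : ℕ, ∀ x ∈ X,
      x ⬝ᵥ ((A ^ k)ᵀ * Q * A ^ k).mulVec x + q ⬝ᵥ (A ^ k).mulVec x ≤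
        t * normAP ^ (2 * k) * μ ^ 2 +
          (Real.sqrt (q ⬝ᵥ q) / Real.sqrt lmin) * normAP ^ k * μ := by
  intro k x hxX
  classical
  set quad : (Fin d → ℝ) → ℝ := fun v => v ⬝ᵥ P.mulVec v with hquaddef
  have hquad_nonneg : ∀ v, 0 ≤ quad v := fun v => by
    have := hP.posSemidef.dotProduct_mulVec_nonneg v; simpa using this
  have key : ∀ (B C : Matrix (Fin d) (Fin d) ℝ) (v : Fin d → ℝ),
      v ⬝ᵥ (Bᵀ * C * B).mulVec v = (B.mulVec v) ⬝ᵥ C.mulVec (B.mulVec v) := by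
    intro B C v
    rw [← Matrix.mulVec_mulVec, ← Matrix.mulVec_mulVec, Matrix.dotProduct_mulVec,
      Matrix.vecMul_transpose]
  -- the set defining normAP
  set S : Set ℝ := {r : ℝ | ∃ x : Fin d → ℝ, x ≠ 0 ∧
      r = Real.sqrt ((x ⬝ᵥ (Aᵀ * P * A).mulVec x) / (x ⬝ᵥ P.mulVec x))} with hS
  have hSbdd : BddAbove S := by
    refine ⟨1, fun r hr => ?_⟩
    obtain ⟨z, hz, rfl⟩ := hr
    have hden : 0 < z ⬝ᵥ P.mulVec z := by
      have := hP.dotProduct_mulVec_pos hz; simpa using this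
    have hnum : z ⬝ᵥ (Aᵀ * P * A).mulVec z ≤ z ⬝ᵥ P.mulVec z := by
      have := hLyap.dotProduct_mulVec_nonneg z
      simp only [Matrix.sub_mulVec, dotProduct_sub, RCLike.re_to_real, star_trivial] at this
      linarith
    exact Real.sqrt_le_one.mpr ((div_le_one hden).mpr hnum)
  have hAPle : ∀ z : Fin d → ℝ, quad (A.mulVec z) ≤ normAP ^ 2 * quad z := by
    intro z
    by_cases hz : z = 0
    · subst hz
      simp [hquaddef, Matrix.mulVec_zero]
    · have hden : 0 < quad z := by have := hP.dotProduct_mulVec_pos hz; simpa using this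
      have hnum_eq : z ⬝ᵥ (Aᵀ * P * A).mulVec z = quad (A.mulVec z) := key A P z
      have hmem : Real.sqrt ((z ⬝ᵥ (Aᵀ * P * A).mulVec z) / (z ⬝ᵥ P.mulVec z)) ∈ S :=
        ⟨z, hz, rfl⟩
      have hr : Real.sqrt ((z ⬝ᵥ (Aᵀ * P * A).mulVec z) / (z ⬝ᵥ P.mulVec z)) ≤ normAP := by
        rw [hnorm]; exact le_csSup hSbdd hmem
      have hratio_nonneg : 0 ≤ (z ⬝ᵥ (Aᵀ * P * A).mulVec z) / (z ⬝ᵥ P.mulVec z) := by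
        apply div_nonneg _ (le_of_lt hden)
        rw [hnum_eq]; exact hquad_nonneg _
      have h2 : (z ⬝ᵥ (Aᵀ * P * A).mulVec z) / (z ⬝ᵥ P.mulVec z) ≤ normAP ^ 2 := by
        calc (z ⬝ᵥ (Aᵀ * P * A).mulVec z) / (z ⬝ᵥ P.mulVec z)
            = (Real.sqrt ((z ⬝ᵥ (Aᵀ * P * A).mulVec z) / (z ⬝ᵥ P.mulVec z))) ^ 2 :=
              (Real.sq_sqrt hratio_nonneg).symm
          _ ≤ normAP ^ 2 := by
              apply pow_le_pow_left₀ (Real.sqrt_nonneg _) hr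
      have := (div_le_iff₀ hden).mp h2
      rw [hnum_eq] at this
      linarith [this]
  have hnormAP_nonneg : 0 ≤ normAP := by
    set z : Fin d → ℝ := Pi.single (⟨0, hd⟩ : Fin d) (1:ℝ) with hzdef
    have hz : z ≠ 0 := by
      intro h
      have := congrFun h ⟨0, hd⟩
      simp [hzdef] at this
    have hmem : Real.sqrt ((z ⬝ᵥ (Aᵀ * P * A).mulVec z) / (z ⬝ᵥ P.mulVec z)) ∈ S :=
      ⟨z, hz, rfl⟩
    exact le_trans (Real.sqrt_nonneg _) (hnorm ▸ le_csSup hSbdd hmem)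
  -- iterated bound
  have hpow : ∀ (m : ℕ) (z : Fin d → ℝ),
      quad ((A ^ m).mulVec z) ≤ normAP ^ (2 * m) * quad z := by
    intro m
    induction m with
    | zero => intro z; simp [Matrix.one_mulVec]
    | succ n ih =>
      intro z
      have h1 : (A ^ (n+1)).mulVec z = A.mulVec ((A ^ n).mulVec z) := by
        rw [pow_succ', ← Matrix.mulVec_mulVec]
      rw [h1]
      calc quad (A.mulVec ((A ^ n).mulVec z)) ≤ normAP ^ 2 * quad ((A ^ n).mulVec z) :=
            hAPle _
        _ ≤ normAP ^ 2 * (normAP ^ (2 * n) * quad z) := by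
            apply mul_le_mul_of_nonneg_left (ih z) (sq_nonneg _)
        _ = normAP ^ (2 * (n + 1)) * quad z := by ring
  -- Q bound
  have hQb : ∀ y : Fin d → ℝ, y ⬝ᵥ Q.mulVec y ≤ t * quad y := by
    intro y
    have := htPQ.dotProduct_mulVec_nonneg y
    simp only [Matrix.sub_mulVec, Matrix.smul_mulVec, dotProduct_sub, dotProduct_smul,
      RCLike.re_to_real, star_trivial, smul_eq_mul] at this
    linarith
  -- lmin facts
  have hlmin_pos : 0 < lmin := by
    haveI : Nonempty (Fin d) := ⟨⟨0, hd⟩⟩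
    obtain ⟨a, ha⟩ := Finite.exists_min hP.1.eigenvalues
    rw [hlmin]
    exact lt_of_lt_of_le (hP.eigenvalues_pos a) (le_ciInf ha)
  have hlminb : ∀ y : Fin d → ℝ, lmin * (y ⬝ᵥ y) ≤ quad y := fun y =>
    hlmin ▸ aux_lmin_bound d P hP y
  -- μ facts
  have hcont : Continuous fun v : Fin d → ℝ => Real.sqrt (v ⬝ᵥ P.mulVec v) := by
    apply Real.continuous_sqrt.comp
    simp only [dotProduct, mulVec]
    fun_prop
  have hμbdd : BddAbove ((fun x => Real.sqrt (x ⬝ᵥ P.mulVec x)) '' X) :=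
    (hX.image hcont).bddAbove
  have hμx : Real.sqrt (quad x) ≤ μ := hμ ▸ le_csSup hμbdd ⟨x, hxX, rfl⟩
  have hμnn : 0 ≤ μ := le_trans (Real.sqrt_nonneg _) hμx
  have hqx : quad x ≤ μ ^ 2 := by
    calc quad x = (Real.sqrt (quad x)) ^ 2 := (Real.sq_sqrt (hquad_nonneg x)).symm
      _ ≤ μ ^ 2 := pow_le_pow_left₀ (Real.sqrt_nonneg _) hμx 2
  -- abbreviation
  set y : Fin d → ℝ := (A ^ k).mulVec x with hy
  have hterm1 : x ⬝ᵥ ((A ^ k)ᵀ * Q * A ^ k).mulVec x ≤ t * normAP ^ (2 * k) * μ ^ 2 := by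
    rw [key]
    calc y ⬝ᵥ Q.mulVec y ≤ t * quad y := hQb y
      _ ≤ t * (normAP ^ (2 * k) * quad x) := by
          apply mul_le_mul_of_nonneg_left (hpow k x) (le_of_lt ht)
      _ ≤ t * (normAP ^ (2 * k) * μ ^ 2) := by
          apply mul_le_mul_of_nonneg_left _ (le_of_lt ht)
          exact mul_le_mul_of_nonneg_left hqx (by positivity)
      _ = t * normAP ^ (2 * k) * μ ^ 2 := by ring
  have hsq_quady : Real.sqrt (quad y) ≤ normAP ^ k * μ := by
    have h1 : quad y ≤ (normAP ^ k) ^ 2 * quad x := by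
      have := hpow k x
      calc quad y ≤ normAP ^ (2 * k) * quad x := this
        _ = (normAP ^ k) ^ 2 * quad x := by ring
    calc Real.sqrt (quad y) ≤ Real.sqrt ((normAP ^ k) ^ 2 * quad x) :=
          Real.sqrt_le_sqrt h1
      _ = normAP ^ k * Real.sqrt (quad x) := by
          rw [Real.sqrt_mul (sq_nonneg _), Real.sqrt_sq (by positivity)]
      _ ≤ normAP ^ k * μ := mul_le_mul_of_nonneg_left hμx (by positivity)
  have hterm2 : q ⬝ᵥ (A ^ k).mulVec x ≤
      (Real.sqrt (q ⬝ᵥ q) / Real.sqrt lmin) * normAP ^ k * μ := by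
    have hCS : q ⬝ᵥ y ≤ Real.sqrt (q ⬝ᵥ q) * Real.sqrt (y ⬝ᵥ y) := by
      have := Real.sum_mul_le_sqrt_mul_sqrt Finset.univ q y
      simpa [dotProduct, sq] using this
    have hyy : Real.sqrt (y ⬝ᵥ y) ≤ Real.sqrt (quad y) / Real.sqrt lmin := by
      have h1 : y ⬝ᵥ y ≤ quad y / lmin := by
        rw [le_div_iff₀ hlmin_pos]
        have := hlminb y; linarith
      calc Real.sqrt (y ⬝ᵥ y) ≤ Real.sqrt (quad y / lmin) := Real.sqrt_le_sqrt h1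
        _ = Real.sqrt (quad y) / Real.sqrt lmin := Real.sqrt_div (hquad_nonneg y) lmin
    calc q ⬝ᵥ y ≤ Real.sqrt (q ⬝ᵥ q) * Real.sqrt (y ⬝ᵥ y) := hCS
      _ ≤ Real.sqrt (q ⬝ᵥ q) * (Real.sqrt (quad y) / Real.sqrt lmin) :=
          mul_le_mul_of_nonneg_left hyy (Real.sqrt_nonneg _)
      _ = (Real.sqrt (q ⬝ᵥ q) / Real.sqrt lmin) * Real.sqrt (quad y) := by ring
      _ ≤ (Real.sqrt (q ⬝ᵥ q) / Real.sqrt lmin) * (normAP ^ k * μ) := by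
          apply mul_le_mul_of_nonneg_left hsq_quady
          positivity
      _ = (Real.sqrt (q ⬝ᵥ q) / Real.sqrt lmin) * normAP ^ k * μ := by ring
  linarith
end
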